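/- Let (G,U,k,ℓ) be an instance of Cycle-HitPack and let F be a feedback vertex set of G. Then (G,U,k,ℓ) is a Yes-instance if and only if there exists a set F' ⊆ F ∖ U with |F'| ≤ k such that (G − F', U ∪ (F ∖ F'), k − |F'|, ℓ) is a Yes-instance. -/

import Mathlib

/-- The graph `G − S`: delete the vertices of `S` (keeping the ambient vertex type,
all edges incident to `S` are removed, so the deleted vertices become isolated and in
particular lie on no cycle). -/
def deleteVertices {V : Type} (G : SimpleGraph V) (S : Finset V) : SimpleGraph V where
  Adj u v := G.Adj u v ∧ u ∉ S ∧ v ∉ S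
  symm := ⟨fun _ _ h => ⟨h.1.symm, h.2.2, h.2.1⟩⟩
  loopless := ⟨fun u h => G.loopless.irrefl u h.1⟩

/-- `G` contains `ℓ` pairwise vertex-disjoint cycles. -/
def HasCyclePacking {V : Type} (G : SimpleGraph V) (ℓ : ℕ) : Prop :=
  ∃ l : List (Σ v : V, G.Walk v v), l.length = ℓ ∧ (∀ p ∈ l, p.2.IsCycle) ∧
    l.Pairwise fun p q => ∀ x : V, x ∈ p.2.support → x ∈ q.2.support → False

/-- `(G,U,k,ℓ)` is a Yes-instance of Cycle-HitPack: there is a set `S` of at most `k`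
deletable vertices such that `G − S` has no `ℓ` pairwise vertex-disjoint cycles. -/
def IsYesInstance {V : Type} (G : SimpleGraph V) (U : Finset V) (k ℓ : ℕ) : Prop :=
  ∃ S : Finset V, (∀ x ∈ S, x ∉ U) ∧ S.card ≤ k ∧
    ¬ HasCyclePacking (deleteVertices G S) ℓ

/-- `F` is a feedback vertex set of `G`: it meets every cycle of `G`. -/
def IsFeedbackVertexSet {V : Type} (G : SimpleGraph V) (F : Finset V) : Prop :=
  ∀ ⦃v : V⦄ (c : G.Walk v v), c.IsCycle → ∃ x ∈ F, x ∈ c.support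

lemma delete_delete {V : Type} [DecidableEq V] (G : SimpleGraph V) (A B : Finset V) :
    deleteVertices (deleteVertices G A) B = deleteVertices G (A ∪ B) := by
  ext u v
  simp only [deleteVertices, Finset.mem_union]
  tauto

/-- An instance `(G,U,k,ℓ)` of Cycle-HitPack with feedback vertex set `F` is a
Yes-instance iff there is some `F' ⊆ F ∖ U` with `|F'| ≤ k` such that
`(G − F', U ∪ (F ∖ F'), k − |F'|, ℓ)` is a Yes-instance. -/
theorem yes_iff_exists_guess_on_fvs {V : Type} [Fintype V] [DecidableEq V]
    (G : SimpleGraph V) (U F : Finset V) (hF : IsFeedbackVertexSet G F) (k ℓ : ℕ) :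
    IsYesInstance G U k ℓ ↔
      ∃ F' : Finset V, F' ⊆ F \ U ∧ F'.card ≤ k ∧
        IsYesInstance (deleteVertices G F') (U ∪ (F \ F')) (k - F'.card) ℓ := by
  constructor
  · rintro ⟨S, hSU, hSk, hSpack⟩
    refine ⟨S ∩ F, ?_, ?_, S \ (S ∩ F), ?_, ?_, ?_⟩
    · intro x hx
      simp only [Finset.mem_inter] at hx
      exact Finset.mem_sdiff.2 ⟨hx.2, hSU x hx.1⟩
    · exact le_trans (Finset.card_le_card Finset.inter_subset_left) hSk
    · intro x hx
      simp only [Finset.mem_sdiff, Finset.mem_inter, not_and] at hx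
      simp only [Finset.mem_union, Finset.mem_sdiff]
      push_neg
      exact ⟨hSU x hx.1, fun hxF => absurd (hx.2 hx.1) (by simp [hxF])⟩
    · rw [Finset.card_sdiff_of_subset Finset.inter_subset_left]
      exact Nat.sub_le_sub_right hSk _
    · rwa [delete_delete, Finset.union_sdiff_of_subset Finset.inter_subset_left]
  · rintro ⟨F', hF'sub, hF'k, S', hS'U, hS'k, hS'pack⟩
    refine ⟨F' ∪ S', ?_, ?_, ?_⟩
    · intro x hx
      rcases Finset.mem_union.1 hx with h | h
      · exact (Finset.mem_sdiff.1 (hF'sub h)).2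
      · intro hxU
        exact hS'U x h (Finset.mem_union_left _ hxU)
    · calc (F' ∪ S').card ≤ F'.card + S'.card := Finset.card_union_le _ _
        _ ≤ F'.card + (k - F'.card) := by omega
        _ ≤ k := by omega
    · rwa [delete_delete] at hS'pack
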